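/- Let S ⊂ ℤ_{≥0}^r be a good semigroup with weight function w and let ℓ ∈ ℤ_{≥0}^r with w(ℓ) ≥ 2. Then there exists a 'good direction' i ∈ {1,…,r} such that w(ℓ − eᵢ) < w(ℓ) < w(ℓ + eᵢ), and moreover for every cube (ℓ, J⁺, J⁻) with i ∉ J⁺ ∪ J⁻ admitting ℓ as an M-vertex, every vertex ℓ' of that cube satisfies w(ℓ' − eᵢ) < w(ℓ'). -/

import Mathlib

open Finset

/-- Lattice points (we work in `ℤ^r`; nonnegativity is imposed via hypotheses). -/
abbrev Pt (r : ℕ) := Fin r → ℤ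

/-- The `i`-th standard basis vector. -/
def E {r : ℕ} (i : Fin r) : Pt r := Pi.single i 1

/-- `e_K = ∑_{i ∈ K} e_i`. -/
def eK {r : ℕ} (K : Finset (Fin r)) : Pt r := ∑ i ∈ K, E i

/-- `Δ̄ᵢ(ℓ) = {s ∈ S : sᵢ = ℓᵢ, sⱼ ≥ ℓⱼ ∀ j ≠ i}`. -/
def DeltaBarI {r : ℕ} (S : Set (Pt r)) (ℓ : Pt r) (i : Fin r) : Set (Pt r) :=
  {s | s ∈ S ∧ s i = ℓ i ∧ ∀ j, j ≠ i → ℓ j ≤ s j}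

/-- `Δᵢ(ℓ) = {s ∈ S : sᵢ = ℓᵢ, sⱼ > ℓⱼ ∀ j ≠ i}`. -/
def DeltaI {r : ℕ} (S : Set (Pt r)) (ℓ : Pt r) (i : Fin r) : Set (Pt r) :=
  {s | s ∈ S ∧ s i = ℓ i ∧ ∀ j, j ≠ i → ℓ j < s j}

/-- `Δ(ℓ) = ∪ᵢ Δᵢ(ℓ)`. -/
def Delta {r : ℕ} (S : Set (Pt r)) (ℓ : Pt r) : Set (Pt r) := ⋃ i, DeltaI S ℓ i

/-- A good (local) semigroup `S ⊂ ℤ_{≥0}^r` with conductor `c`. -/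
structure GoodSemigroup (r : ℕ) where
  S : Set (Pt r)
  c : Pt r
  nonneg : ∀ s ∈ S, (0 : Pt r) ≤ s
  zero_mem : (0 : Pt r) ∈ S
  add_mem : ∀ s ∈ S, ∀ t ∈ S, s + t ∈ S
  coord_zero : ∀ s ∈ S, ∀ i, s i = 0 → s = 0
  min_mem : ∀ s ∈ S, ∀ t ∈ S, s ⊓ t ∈ S
  prop3 : ∀ s ∈ S, ∀ t ∈ S, ∀ i, s i = t i →
    ∃ u ∈ S, s ⊓ t ≤ u ∧ s i < u i ∧ ∀ j, j ≠ i → s j ≠ t j → u j = (s ⊓ t) j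
  conductor_nonneg : (0 : Pt r) ≤ c
  conductor_mem : ∀ ℓ : Pt r, c ≤ ℓ → ℓ ∈ S
  conductor_min : ∀ c' : Pt r, 0 ≤ c' → (∀ ℓ, c' ≤ ℓ → ℓ ∈ S) → c ≤ c'

/-- `h` is the (combinatorial) Hilbert function of the good semigroup `G`. -/
def IsHilbert {r : ℕ} (G : GoodSemigroup r) (h : Pt r → ℤ) : Prop :=
  h 0 = 0 ∧ ∀ ℓ : Pt r, 0 ≤ ℓ → ∀ i : Fin r,
    (h (ℓ + E i) = h ℓ + 1 ↔ (DeltaBarI G.S ℓ i).Nonempty) ∧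
    (h (ℓ + E i) = h ℓ ↔ ¬ (DeltaBarI G.S ℓ i).Nonempty)

/-- `w` is the weight function of the good semigroup `G` (i.e. `w(ℓ) = 2h(ℓ) − |ℓ|`),
characterized by `w(0) = 0` and the step property. -/
def IsWeight {r : ℕ} (G : GoodSemigroup r) (w : Pt r → ℤ) : Prop :=
  w 0 = 0 ∧ ∀ ℓ : Pt r, 0 ≤ ℓ → ∀ i : Fin r,
    (w (ℓ + E i) = w ℓ + 1 ↔ (DeltaBarI G.S ℓ i).Nonempty) ∧
    (w (ℓ + E i) = w ℓ - 1 ↔ ¬ (DeltaBarI G.S ℓ i).Nonempty)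

/-- Generalized local minimum point of the weight function. -/
def GLM {r : ℕ} (w : Pt r → ℤ) (p : Pt r) : Prop :=
  0 ≤ p ∧ ∀ i : Fin r, 1 ≤ p i → w p < w (p - E i)

/-- Local minimum point of the weight function. -/
def LocMin {r : ℕ} (w : Pt r → ℤ) (p : Pt r) : Prop :=
  GLM w p ∧ ∀ i : Fin r, w p < w (p + E i)


section Stmt19Aux
variable {r : ℕ}

lemma s19_E_apply (i j : Fin r) : E i j = if j = i then 1 else 0 := by
  simp [E, Pi.single_apply]

lemma s19_E_self (i : Fin r) : E i i = 1 := by simp [s19_E_apply]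

lemma s19_E_ne {i j : Fin r} (h : j ≠ i) : E i j = 0 := by simp [s19_E_apply, h]

lemma s19_E_nonneg (i : Fin r) : (0 : Pt r) ≤ E i := by
  rw [Pi.le_def]; intro j
  rw [Pi.zero_apply, s19_E_apply]
  split <;> norm_num

lemma eK_apply (K : Finset (Fin r)) (j : Fin r) : eK K j = if j ∈ K then 1 else 0 := by
  classical
  rw [eK, Finset.sum_apply]
  simp only [s19_E_apply]
  rw [Finset.sum_ite_eq K j (fun _ => (1:ℤ))]

lemma eK_nonneg (K : Finset (Fin r)) : (0 : Pt r) ≤ eK K := by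
  rw [Pi.le_def]; intro j
  rw [Pi.zero_apply, eK_apply]; split <;> norm_num

def s19sum (L : List (Fin r)) : Pt r := (L.map E).sum

lemma s19sum_nil : s19sum ([] : List (Fin r)) = 0 := rfl

lemma s19sum_cons (d : Fin r) (L : List (Fin r)) : s19sum (d :: L) = E d + s19sum L := by
  simp [s19sum]

lemma s19sum_reverse (L : List (Fin r)) : s19sum L.reverse = s19sum L := by
  rw [s19sum, s19sum, List.map_reverse, List.sum_reverse]

open scoped Classical in
noncomputable def s19eps (S : Set (Pt r)) (m : Pt r) (d : Fin r) : ℤ :=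
  if (DeltaBarI S m d).Nonempty then 1 else -1

lemma s19eps_le_one (S : Set (Pt r)) (m : Pt r) (d : Fin r) : s19eps S m d ≤ 1 := by
  unfold s19eps; split <;> norm_num

lemma s19eps_pos {S : Set (Pt r)} {m : Pt r} {d : Fin r}
    (h : (DeltaBarI S m d).Nonempty) : s19eps S m d = 1 := by
  unfold s19eps; exact if_pos h

lemma s19eps_neg {S : Set (Pt r)} {m : Pt r} {d : Fin r}
    (h : ¬ (DeltaBarI S m d).Nonempty) : s19eps S m d = -1 := by
  unfold s19eps; exact if_neg h

noncomputable def s19F (S : Set (Pt r)) : Pt r → List (Fin r) → ℤ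
  | _, [] => 0
  | m, d :: L => s19eps S m d + s19F S (m + E d) L

lemma s19_mono {S : Set (Pt r)} {a b : Pt r} {d : Fin r} (hab : a ≤ b) (hd : a d = b d)
    (h : (DeltaBarI S b d).Nonempty) : (DeltaBarI S a d).Nonempty := by
  obtain ⟨s, hsS, hsd, hsge⟩ := h
  exact ⟨s, hsS, by rw [hsd, hd], fun j hj => le_trans (Pi.le_def.mp hab j) (hsge j hj)⟩

/-- the weight changes by `s19eps` along a unit step. -/
lemma s19step {G : GoodSemigroup r} {w : Pt r → ℤ} (hw : IsWeight G w) {m : Pt r}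
    (hm : 0 ≤ m) (d : Fin r) : w (m + E d) = w m + s19eps G.S m d := by
  by_cases h : (DeltaBarI G.S m d).Nonempty
  · rw [s19eps_pos h]; exact (hw.2 m hm d).1.mpr h
  · rw [s19eps_neg h]
    have := (hw.2 m hm d).2.mpr h
    linarith

/-- the weight along any monotone path is the sum of the steps. -/
lemma s19F_eval {G : GoodSemigroup r} {w : Pt r → ℤ} (hw : IsWeight G w) :
    ∀ (L : List (Fin r)) (m : Pt r), 0 ≤ m → w (m + s19sum L) = w m + s19F G.S m L := by
  intro L
  induction L with
  | nil => intro m hm; simp [s19F, s19sum_nil]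
  | cons d M ih =>
    intro m hm
    have h1 : m + s19sum (d :: M) = (m + E d) + s19sum M := by
      rw [s19sum_cons]; abel
    rw [h1, ih (m + E d) (add_nonneg hm (s19_E_nonneg d)), s19step hw hm d]
    show w m + s19eps G.S m d + s19F G.S (m + E d) M
      = w m + (s19eps G.S m d + s19F G.S (m + E d) M)
    ring

lemma s19F_snoc (S : Set (Pt r)) :
    ∀ (L : List (Fin r)) (m : Pt r) (d : Fin r),
      s19F S m (L ++ [d]) = s19F S m L + s19eps S (m + s19sum L) d := by
  intro L
  induction L with
  | nil => intro m d; simp [s19F, s19sum_nil]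
  | cons x M ih =>
    intro m d
    show s19eps S m x + s19F S (m + E x) (M ++ [d]) = _
    rw [ih (m + E x) d]
    show _ = s19eps S m x + s19F S (m + E x) M + s19eps S (m + s19sum (x :: M)) d
    have : m + E x + s19sum M = m + s19sum (x :: M) := by rw [s19sum_cons]; abel
    rw [this]; ring

/-- The pairing lemma: a path and its reverse, jointly covering `p`, have
nonpositive total weight change if all the doubled steps at `p` are blocked. -/
lemma s19_pair (G : GoodSemigroup r) (p : Pt r) :
    ∀ (L : List (Fin r)) (a b : Pt r),
      (∀ d ∈ L, ¬ (DeltaBarI G.S (p - E d) d).Nonempty) →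
      a + b + s19sum L = p →
      s19F G.S a L + s19F G.S b L.reverse ≤ 0 := by
  intro L
  induction L with
  | nil => intro a b _ _; simp [s19F]
  | cons d M ih =>
    intro a b hbl hp
    have hIH := ih (a + E d) b (fun x hx => hbl x (List.mem_cons_of_mem _ hx))
      (by rw [← hp, s19sum_cons]; abel)
    have hrev : (d :: M).reverse = M.reverse ++ [d] := by simp
    rw [hrev, s19F_snoc]
    have hkey : s19eps G.S a d + s19eps G.S (b + s19sum M.reverse) d ≤ 0 := by
      rw [s19sum_reverse]
      have hblk := hbl d (List.mem_cons_self)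
      by_cases h1 : (DeltaBarI G.S a d).Nonempty
      · by_cases h2 : (DeltaBarI G.S (b + s19sum M) d).Nonempty
        · exfalso
          obtain ⟨s, hsS, hsd, hsge⟩ := h1
          obtain ⟨t, htS, htd, htge⟩ := h2
          apply hblk
          refine ⟨s + t, G.add_mem s hsS t htS, ?_, ?_⟩
          · have hcd := congrFun hp d
            have : a d + b d + (E d d + s19sum M d) = p d := by
              rw [← hcd, s19sum_cons]; simp [Pi.add_apply]
            rw [s19_E_self] at this
            show s d + t d = p d - E d d
            rw [hsd, htd, s19_E_self]
            show a d + (b d + s19sum M d) = p d - 1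
            linarith
          · intro j hj
            have hcj := congrFun hp j
            have : a j + b j + (E d j + s19sum M j) = p j := by
              rw [← hcj, s19sum_cons]; simp [Pi.add_apply]
            rw [s19_E_ne hj] at this
            have h3 := hsge j hj
            have h4 := htge j hj
            show (p - E d) j ≤ s j + t j
            rw [Pi.sub_apply, s19_E_ne hj]
            have : (b + s19sum M) j = b j + s19sum M j := rfl
            have h4' : b j + s19sum M j ≤ t j := by rw [← this]; exact h4
            linarith
        · rw [s19eps_neg h2]
          have := s19eps_le_one G.S a d; linarith
      · rw [s19eps_neg h1]
        have := s19eps_le_one G.S (b + s19sum M) d; linarith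
    show s19eps G.S a d + s19F G.S (a + E d) M
        + (s19F G.S b M.reverse + s19eps G.S (b + s19sum M.reverse) d) ≤ 0
    linarith

/-- along a list of directions that all fail to increase at `ℓ`, starting at a point
agreeing with `ℓ` on those directions, every step decreases. -/
lemma s19_allDown {S : Set (Pt r)} {ℓ : Pt r} :
    ∀ (M : List (Fin r)), M.Nodup → (∀ x ∈ M, ¬ (DeltaBarI S ℓ x).Nonempty) →
    ∀ m : Pt r, ℓ ≤ m → (∀ x ∈ M, m x = ℓ x) →
    s19F S m M = - (M.length : ℤ) := by
  intro M
  induction M with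
  | nil => intro _ _ m _ _; simp [s19F]
  | cons d M ih =>
    intro hnd hdec m hlm hcoord
    have hnotinc : ¬ (DeltaBarI S m d).Nonempty := fun h =>
      hdec d (List.mem_cons_self)
        (s19_mono hlm (hcoord d (List.mem_cons_self)).symm h)
    have hrec : s19F S (m + E d) M = - (M.length : ℤ) := by
      apply ih (List.Nodup.of_cons hnd) (fun x hx => hdec x (List.mem_cons_of_mem _ hx))
      · rw [Pi.le_def]; intro j
        have h0 := Pi.le_def.mp (s19_E_nonneg d) j
        rw [Pi.zero_apply] at h0
        have h1 := Pi.le_def.mp hlm j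
        rw [Pi.add_apply]
        linarith
      · intro x hx
        have hxd : x ≠ d := by
          rintro rfl
          exact (List.nodup_cons.mp hnd).1 hx
        rw [Pi.add_apply, s19_E_ne hxd, add_zero]
        exact hcoord x (List.mem_cons_of_mem _ hx)
    show s19eps S m d + s19F S (m + E d) M = _
    rw [s19eps_neg hnotinc, hrec, List.length_cons]
    push_cast
    ring

/-- along a list of distinct directions all having coordinate `0` at the current point,
with some coordinate `k` positive outside the list, every step decreases. -/
lemma s19_zeroblock (G : GoodSemigroup r) :
    ∀ (M : List (Fin r)) (m : Pt r) (k : Fin r), M.Nodup →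
      1 ≤ m k → (∀ x ∈ M, m x = 0) → (∀ x ∈ M, x ≠ k) →
      s19F G.S m M = - (M.length : ℤ) := by
  intro M
  induction M with
  | nil => intro m k _ _ _ _; simp [s19F]
  | cons d M ih =>
    intro m k hnd hk hm0 hnek
    have hnotinc : ¬ (DeltaBarI G.S m d).Nonempty := by
      rintro ⟨s, hsS, hsd, hsge⟩
      have hsd0 : s d = 0 := by rw [hsd, hm0 d (List.mem_cons_self)]
      have hs0 : s = 0 := G.coord_zero s hsS d hsd0
      have hkd : k ≠ d := (hnek d (List.mem_cons_self)).symm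
      have := hsge k hkd
      rw [hs0, Pi.zero_apply] at this
      linarith
    have hrec : s19F G.S (m + E d) M = - (M.length : ℤ) := by
      apply ih (m + E d) k (List.Nodup.of_cons hnd)
      · have hkd : k ≠ d := (hnek d (List.mem_cons_self)).symm
        rw [Pi.add_apply, s19_E_ne hkd, add_zero]; exact hk
      · intro x hx
        have hxd : x ≠ d := by rintro rfl; exact (List.nodup_cons.mp hnd).1 hx
        rw [Pi.add_apply, s19_E_ne hxd, add_zero]
        exact hm0 x (List.mem_cons_of_mem _ hx)
      · exact fun x hx => hnek x (List.mem_cons_of_mem _ hx)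
    show s19eps G.S m d + s19F G.S (m + E d) M = _
    rw [s19eps_neg hnotinc, hrec, List.length_cons]
    push_cast
    ring

/-- existence of a monotone path from `0` to `ℓ` using only directions where `ℓ` is positive. -/
lemma s19_exists_path : ∀ (n : ℕ) (ℓ : Pt r), 0 ≤ ℓ → (∑ i, ℓ i) = (n : ℤ) →
    ∃ L : List (Fin r), s19sum L = ℓ ∧ ∀ d ∈ L, 1 ≤ ℓ d := by
  intro n
  induction n with
  | zero =>
    intro ℓ h0 hsum
    have hz : ℓ = 0 := by
      funext j
      have hnn : ∀ i ∈ Finset.univ, (0:ℤ) ≤ ℓ i := fun i _ => Pi.le_def.mp h0 i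
      have := (Finset.sum_eq_zero_iff_of_nonneg hnn).mp (by rw [hsum]; norm_num)
      exact this j (Finset.mem_univ j)
    exact ⟨[], by rw [hz]; rfl, by simp⟩
  | succ n ih =>
    intro ℓ h0 hsum
    have hex : ∃ i, 1 ≤ ℓ i := by
      by_contra h
      push_neg at h
      have hz : ∀ i ∈ Finset.univ, ℓ i = 0 := fun i _ =>
        le_antisymm (by have := h i; linarith) (Pi.le_def.mp h0 i)
      have := Finset.sum_eq_zero hz
      rw [this] at hsum
      have : ((n:ℤ) + 1) = 0 := by push_cast at hsum ⊢; linarith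
      omega
    obtain ⟨i, hi⟩ := hex
    have h0' : 0 ≤ ℓ - E i := by
      rw [Pi.le_def]; intro j
      rw [Pi.zero_apply, Pi.sub_apply, s19_E_apply]
      by_cases hj : j = i
      · rw [if_pos hj]; subst hj; linarith
      · rw [if_neg hj]
        have hh := Pi.le_def.mp h0 j
        rw [Pi.zero_apply] at hh
        linarith
    have hsum' : (∑ j, (ℓ - E i) j) = (n : ℤ) := by
      have hE : (∑ j, E i j) = (1:ℤ) := by
        simp only [s19_E_apply]
        rw [Finset.sum_ite_eq' Finset.univ i (fun _ => (1:ℤ))]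
        simp
      have : (∑ j, (ℓ - E i) j) = (∑ j, ℓ j) - (∑ j, E i j) := by
        rw [← Finset.sum_sub_distrib]; rfl
      rw [this, hsum, hE]; push_cast; ring
    obtain ⟨L, hLsum, hLmem⟩ := ih (ℓ - E i) h0' hsum'
    refine ⟨i :: L, ?_, ?_⟩
    · rw [s19sum_cons, hLsum]; abel
    · intro d hd
      rcases List.mem_cons.mp hd with h | h
      · subst h; exact hi
      · have := hLmem d h
        have hE := Pi.le_def.mp (s19_E_nonneg i) d
        rw [Pi.zero_apply] at hE
        rw [Pi.sub_apply] at this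
        linarith

end Stmt19Aux

/-- existence of a good direction at any lattice point of weight `≥ 2`. -/
theorem stmt19 {r : ℕ} (G : GoodSemigroup r) (w : Pt r → ℤ) (hw : IsWeight G w)
    (ℓ : Pt r) (hl : 0 ≤ ℓ) (h2 : 2 ≤ w ℓ) :
    ∃ i : Fin r, w (ℓ - E i) < w ℓ ∧ w ℓ < w (ℓ + E i) ∧
      ∀ Jp Jm : Finset (Fin r), Disjoint Jp Jm → i ∉ Jp → i ∉ Jm → eK Jm ≤ ℓ →
        (∀ j ∈ Jp, w (ℓ + E j) < w ℓ) → (∀ j ∈ Jm, w (ℓ - E j) < w ℓ) →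
        ∀ Kp ⊆ Jp, ∀ Km ⊆ Jm,
          w ((ℓ + eK Kp - eK Km) - E i) < w (ℓ + eK Kp - eK Km) := by
  classical
  set D : Finset (Fin r) := Finset.univ.filter (fun j => ¬ (DeltaBarI G.S ℓ j).Nonempty)
    with hD
  have hmemD : ∀ j, j ∈ D ↔ ¬ (DeltaBarI G.S ℓ j).Nonempty := by
    intro j; rw [hD, Finset.mem_filter]; simp
  have KEY : ∃ i : Fin r, i ∉ D ∧ 1 ≤ ℓ i ∧
      (DeltaBarI G.S ((ℓ + eK D) - E i) i).Nonempty := by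
    by_contra hK
    push_neg at hK
    have hsum_nn : (0:ℤ) ≤ ∑ i, ℓ i := Finset.sum_nonneg (fun i _ => by
      have hh := Pi.le_def.mp hl i; rw [Pi.zero_apply] at hh; exact hh)
    obtain ⟨L0, hL0sum, hL0mem⟩ :=
      s19_exists_path (∑ i, ℓ i).toNat ℓ hl (Int.toNat_of_nonneg hsum_nn).symm
    have hLDsum : s19sum (D.toList) = eK D := by
      rw [s19sum, Finset.sum_map_toList, eK]
    have hLDnodup : D.toList.Nodup := Finset.nodup_toList D
    have hLDlen : (D.toList.length : ℤ) = (D.card : ℤ) := by rw [Finset.length_toList]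
    have hblock : ∀ d ∈ L0, ¬ (DeltaBarI G.S ((ℓ + eK D) - E d) d).Nonempty := by
      intro d hd
      by_cases hdD : d ∈ D
      · rintro ⟨u, huS, hud, huge⟩
        apply (hmemD d).mp hdD
        refine ⟨u, huS, ?_, ?_⟩
        · rw [hud, Pi.sub_apply, Pi.add_apply, eK_apply, if_pos hdD, s19_E_self]
          ring
        · intro j hj
          have hu := huge j hj
          rw [Pi.sub_apply, s19_E_ne hj, Pi.add_apply, eK_apply] at hu
          split at hu <;> linarith
      · exact Set.not_nonempty_iff_eq_empty.mpr (hK d hdD (hL0mem d hd))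
    have e1 : w ℓ = s19F G.S 0 L0 := by
      have h := s19F_eval hw L0 0 (le_refl 0)
      rw [zero_add, hL0sum, hw.1, zero_add] at h
      exact h
    have e2 : w (ℓ + eK D) = w ℓ + s19F G.S ℓ D.toList := by
      have h := s19F_eval hw D.toList ℓ hl
      rw [hLDsum] at h
      exact h
    have e3 : s19F G.S ℓ D.toList = - (D.card : ℤ) := by
      rw [← hLDlen]
      exact s19_allDown D.toList hLDnodup
        (fun x hx => (hmemD x).mp (Finset.mem_toList.mp hx)) ℓ (le_refl ℓ) (fun x _ => rfl)
    have e4 : w (eK D) = s19F G.S 0 D.toList := by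
      have h := s19F_eval hw D.toList 0 (le_refl 0)
      rw [zero_add, hLDsum, hw.1, zero_add] at h
      exact h
    have e5 : s19F G.S 0 D.toList ≤ 2 - (D.card : ℤ) := by
      rcases htl : D.toList with _ | ⟨d, M⟩
      · have hc0 : (D.card:ℤ) = 0 := by rw [← hLDlen, htl]; simp
        rw [hc0]
        show (0:ℤ) ≤ 2 - 0
        norm_num
      · have hnd : (d :: M).Nodup := htl ▸ hLDnodup
        have hlen : ((d :: M).length : ℤ) = (D.card:ℤ) := by rw [← htl]; exact hLDlen
        have hdM : d ∉ M := (List.nodup_cons.mp hnd).1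
        have hz : s19F G.S (0 + E d) M = - (M.length : ℤ) := by
          apply s19_zeroblock G M (0 + E d) d (List.Nodup.of_cons hnd)
          · rw [Pi.add_apply, Pi.zero_apply, s19_E_self]; norm_num
          · intro x hx
            have hxd : x ≠ d := by rintro rfl; exact hdM hx
            rw [Pi.add_apply, Pi.zero_apply, s19_E_ne hxd]; norm_num
          · intro x hx; rintro rfl; exact hdM hx
        show s19eps G.S 0 d + s19F G.S (0 + E d) M ≤ _
        rw [hz]
        have heps := s19eps_le_one G.S 0 d
        rw [List.length_cons] at hlen
        push_cast at hlen
        linarith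
    have hpair := s19_pair G (ℓ + eK D) L0 0 (eK D) hblock (by rw [hL0sum]; abel)
    have e6 : w (ℓ + eK D) = w (eK D) + s19F G.S (eK D) L0.reverse := by
      have h := s19F_eval hw L0.reverse (eK D) (eK_nonneg D)
      rw [s19sum_reverse, hL0sum, add_comm (eK D) ℓ] at h
      exact h
    linarith
  obtain ⟨i, hiD, hi1, hinc⟩ := KEY
  have hincl : (DeltaBarI G.S ℓ i).Nonempty := by
    by_contra h
    exact hiD ((hmemD i).mpr h)
  have heKi : eK D i = 0 := by rw [eK_apply, if_neg hiD]
  refine ⟨i, ?_, ?_, ?_⟩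
  · have h0le : (0:Pt r) ≤ ℓ - E i := by
      rw [Pi.le_def]; intro j
      rw [Pi.zero_apply, Pi.sub_apply, s19_E_apply]
      by_cases hj : j = i
      · rw [if_pos hj]; subst hj; linarith
      · rw [if_neg hj]
        have hh := Pi.le_def.mp hl j; rw [Pi.zero_apply] at hh
        linarith
    have hle : ℓ - E i ≤ (ℓ + eK D) - E i := by
      rw [Pi.le_def]; intro j
      rw [Pi.sub_apply, Pi.sub_apply, Pi.add_apply]
      have hh := Pi.le_def.mp (eK_nonneg D) j; rw [Pi.zero_apply] at hh
      linarith
    have hco : (ℓ - E i) i = ((ℓ + eK D) - E i) i := by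
      rw [Pi.sub_apply, Pi.sub_apply, Pi.add_apply, heKi]; ring
    have hstab := s19_mono hle hco hinc
    have hstep := s19step hw h0le i
    rw [s19eps_pos hstab] at hstep
    have hcan : (ℓ - E i) + E i = ℓ := by abel
    rw [hcan] at hstep
    linarith
  · have hstep := s19step hw hl i
    rw [s19eps_pos hincl] at hstep
    linarith
  · intro Jp Jm hdisj hiJp hiJm hJmle hJp hJm Kp hKp Km hKm
    have hKpD : ∀ j ∈ Kp, j ∈ D := by
      intro j hj
      apply (hmemD j).mpr
      intro hne
      have hstep := s19step hw hl j
      rw [s19eps_pos hne] at hstep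
      have := hJp j (hKp hj)
      linarith
    set q : Pt r := (ℓ + eK Kp - eK Km) - E i with hq
    have hiKp : i ∉ Kp := fun h => hiJp (hKp h)
    have hiKm : i ∉ Km := fun h => hiJm (hKm h)
    have h0q : (0:Pt r) ≤ q := by
      rw [Pi.le_def]; intro j
      rw [Pi.zero_apply]
      rw [hq]
      rw [Pi.sub_apply, Pi.sub_apply, Pi.add_apply, eK_apply, eK_apply, s19_E_apply]
      by_cases hj : j = i
      · subst hj
        rw [if_neg hiKp, if_neg hiKm, if_pos rfl]
        linarith
      · rw [if_neg hj]
        by_cases hjm : j ∈ Km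
        · have hjJm : j ∈ Jm := hKm hjm
          have hb : eK Jm j ≤ ℓ j := Pi.le_def.mp hJmle j
          rw [eK_apply, if_pos hjJm] at hb
          rw [if_pos hjm]
          split <;> linarith
        · rw [if_neg hjm]
          have hh := Pi.le_def.mp hl j; rw [Pi.zero_apply] at hh
          split <;> linarith
    have hqle : q ≤ (ℓ + eK D) - E i := by
      rw [Pi.le_def]; intro j
      rw [hq]
      simp only [Pi.sub_apply, Pi.add_apply, eK_apply, s19_E_apply]
      have hA : (if j ∈ Kp then (1:ℤ) else 0) ≤ (if j ∈ D then 1 else 0) := by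
        by_cases h : j ∈ Kp
        · rw [if_pos h, if_pos (hKpD j h)]
        · rw [if_neg h]; split <;> norm_num
      have hB : (0:ℤ) ≤ if j ∈ Km then 1 else 0 := by split <;> norm_num
      linarith
    have hqco : q i = ((ℓ + eK D) - E i) i := by
      rw [hq]
      rw [Pi.sub_apply, Pi.sub_apply, Pi.sub_apply, Pi.add_apply, Pi.add_apply,
        eK_apply, eK_apply, if_neg hiKp, if_neg hiKm, heKi]
      ring
    have hstab := s19_mono hqle hqco hinc
    have hstep := s19step hw h0q i
    rw [s19eps_pos hstab] at hstep
    have hcan : q + E i = ℓ + eK Kp - eK Km := by rw [hq]; abel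
    rw [hcan] at hstep
    linarith
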